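/- arXiv:2106.03366 — 2 statements merged into one kernel-verified Lean document; each statement's English description precedes it below -/
import Mathlib

section
/- Let f: {−1,1}^n → ℂ be a function with Fourier–Walsh expansion f(x) = ∑_{S⊆[n]} f̂(S) ∏_{i∈S} x_i, define L(f) = max_i ∑_{S ∋ i} |f̂(S)| and let deg f be the degree of f as a multilinear polynomial. There is an absolute constant C ≈ 0.55 such that if √(deg f) · L(f) < C, then for every S ⊆ [n] and every pinning φ: S → {−1,1}, the partition sum ∑_{x ∈ {−1,1}^n, x|_S = φ} exp(f(x)) is nonzero. -/
open Finset

namespace S17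

noncomputable section

variable {n : ℕ}

def sgn (b : Bool) : ℂ := if b then 1 else -1

lemma abs_sgn (b : Bool) : ‖sgn b‖ = 1 := by cases b <;> simp [sgn]

def chi (T : Finset (Fin n)) (x : Fin n → Bool) : ℂ := ∏ i ∈ T, sgn (x i)

lemma abs_chi (T : Finset (Fin n)) (x : Fin n → Bool) : ‖chi T x‖ = 1 := by
  rw [chi, norm_prod]
  simp [abs_sgn]

def ev (f : Finset (Fin n) → ℂ) (x : Fin n → Bool) : ℂ := ∑ T, f T * chi T x

def cube (S : Finset (Fin n)) (φ : Fin n → Bool) : Finset (Fin n → Bool) :=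
  univ.filter (fun x => ∀ i ∈ S, x i = φ i)

def ZU (f : Finset (Fin n) → ℂ) (U S : Finset (Fin n)) (φ : Fin n → Bool) : ℂ :=
  ∑ x ∈ cube S φ, chi U x * Complex.exp (ev f x)

def Z (f : Finset (Fin n) → ℂ) (S : Finset (Fin n)) (φ : Fin n → Bool) : ℂ :=
  ZU f ∅ S φ

lemma Z_eq (f : Finset (Fin n) → ℂ) (S : Finset (Fin n)) (φ : Fin n → Bool) :
    Z f S φ = ∑ x ∈ cube S φ, Complex.exp (ev f x) := by
  simp [Z, ZU, chi]

def Valid (D : ℕ) (L : ℝ) (f : Finset (Fin n) → ℂ) : Prop :=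
  (∀ T, f T ≠ 0 → T.card ≤ D) ∧
  ∀ i : Fin n, ∑ T ∈ univ.filter (fun T : Finset (Fin n) => i ∈ T), ‖f T‖ ≤ L

def Ang (θ : ℝ) (u v : ℂ) : Prop := ∃ w : ℂ, u = v * Complex.exp w ∧ |w.im| ≤ θ

lemma Ang.refl (θ : ℝ) (hθ : 0 ≤ θ) (u : ℂ) : Ang θ u u :=
  ⟨0, by simp, by simpa using hθ⟩

lemma Ang.symm {θ : ℝ} {u v : ℂ} (h : Ang θ u v) : Ang θ v u := by
  obtain ⟨w, hw, him⟩ := h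
  exact ⟨-w, by rw [hw, mul_assoc, ← Complex.exp_add]; simp, by simpa using him⟩

lemma Ang.add_ne_zero {θ : ℝ} {u v : ℂ} (h : Ang θ u v) (hv : v ≠ 0) (hθ : θ < Real.pi) :
    u + v ≠ 0 := by
  obtain ⟨w, hw, him⟩ := h
  intro hc
  rw [hw] at hc
  have h1 : Complex.exp w + 1 = 0 := by
    have : v * (Complex.exp w + 1) = 0 := by ring_nf; ring_nf at hc; linear_combination hc
    rcases mul_eq_zero.1 this with h | h
    · exact absurd h hv
    · exact h
  have hexp : Complex.exp w = -1 := by linear_combination h1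
  have habs : Real.exp w.re = 1 := by
    have := congrArg (‖·‖) hexp
    simpa [Complex.norm_exp] using this
  have hre : w.re = 0 := by
    have h0 : Real.exp w.re = Real.exp 0 := by rw [habs, Real.exp_zero]
    exact Real.exp_injective h0
  have hcos : Real.cos w.im = -1 := by
    have := congrArg Complex.re hexp
    rw [Complex.exp_re] at this
    simpa [hre] using this
  have hlt : -1 < Real.cos w.im := by
    have h1 : |w.im| < Real.pi := lt_of_le_of_lt him hθ
    have h2 := Real.cos_lt_cos_of_nonneg_of_le_pi (abs_nonneg w.im) le_rfl h1
    rw [Real.cos_pi, Real.cos_abs] at h2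
    exact h2
  linarith [hlt] 

lemma Ang.cos_mul_le {θ : ℝ} {u v : ℂ} (h : Ang θ u v) (hθ0 : 0 ≤ θ) (hθ : θ ≤ Real.pi) :
    Real.cos (θ/2) * (‖u‖ + ‖v‖) ≤ ‖u + v‖ := by
  obtain ⟨w, hw, him⟩ := h
  set r := Real.exp w.re with hr
  set φ := w.im
  set s := Real.cos (θ/2) with hs
  have hrpos : 0 < r := Real.exp_pos _
  have hs0 : 0 ≤ s := Real.cos_nonneg_of_mem_Icc ⟨by linarith [Real.pi_pos], by linarith⟩
  have hs1 : s ≤ 1 := Real.cos_le_one _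
  have hcosφ : 2 * s ^ 2 - 1 ≤ Real.cos φ := by
    have h1 : Real.cos θ ≤ Real.cos |φ| :=
      Real.cos_le_cos_of_nonneg_of_le_pi (abs_nonneg φ) hθ him
    rw [Real.cos_abs] at h1
    have h2 : Real.cos θ = 2 * s ^ 2 - 1 := by
      have : θ = 2 * (θ/2) := by ring
      rw [this, Real.cos_two_mul]
    linarith
  have habsu : ‖u‖ = ‖v‖ * r := by
    rw [hw, norm_mul, Complex.norm_exp]
  have hsum : u + v = v * (Complex.exp w + 1) := by rw [hw]; ring
  have hsq : (‖Complex.exp w + 1‖)^2 = r^2 + 2*r*Real.cos φ + 1 := by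
    rw [Complex.sq_norm, Complex.normSq_apply]
    simp only [Complex.add_re, Complex.add_im, Complex.exp_re, Complex.exp_im,
      Complex.one_re, Complex.one_im]
    have := Real.sin_sq_add_cos_sq φ
    ring_nf
    nlinarith [this]
  have key : s * (r + 1) ≤ ‖Complex.exp w + 1‖ := by
    have h2 : (s * (r+1))^2 ≤ (‖Complex.exp w + 1‖)^2 := by
      rw [hsq]
      nlinarith [mul_nonneg (by nlinarith : (0:ℝ) ≤ 1 - s^2) (sq_nonneg (r-1)), sq_nonneg (r-1),
        mul_nonneg hrpos.le (by linarith : (0:ℝ) ≤ Real.cos φ - (2*s^2-1))]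
    exact le_of_pow_le_pow_left₀ two_ne_zero (norm_nonneg _) h2
  calc s * (‖u‖ + ‖v‖) = ‖v‖ * (s * (r+1)) := by
        rw [habsu]; ring
    _ ≤ ‖v‖ * ‖Complex.exp w + 1‖ := by
        apply mul_le_mul_of_nonneg_left key (norm_nonneg _)
    _ = ‖u + v‖ := by rw [hsum, norm_mul]

lemma mem_cube {S : Finset (Fin n)} {φ x} : x ∈ cube S φ ↔ ∀ i ∈ S, x i = φ i := by
  simp [cube]

lemma cube_congr {S : Finset (Fin n)} {φ ψ} (h : ∀ j ∈ S, φ j = ψ j) :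
    cube S φ = cube S ψ := by
  ext x
  simp only [mem_cube]
  exact ⟨fun hx i hi => (hx i hi).trans (h i hi),
    fun hx i hi => (hx i hi).trans (h i hi).symm⟩

lemma ZU_congr (f : Finset (Fin n) → ℂ) (U : Finset (Fin n)) {S : Finset (Fin n)} {φ ψ}
    (h : ∀ j ∈ S, φ j = ψ j) : ZU f U S φ = ZU f U S ψ := by
  rw [ZU, ZU, cube_congr h]

lemma Z_congr (f : Finset (Fin n) → ℂ) {S : Finset (Fin n)} {φ ψ}
    (h : ∀ j ∈ S, φ j = ψ j) : Z f S φ = Z f S ψ := ZU_congr f ∅ h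

lemma cube_insert_true {S : Finset (Fin n)} {φ} {i : Fin n} (hi : i ∉ S) :
    (cube S φ).filter (fun x => x i = true) = cube (insert i S) (Function.update φ i true) := by
  ext x
  simp only [Finset.mem_filter, mem_cube, Finset.mem_insert]
  constructor
  · rintro ⟨h1, h2⟩ j hj
    rcases hj with rfl | hj
    · rw [h2, Function.update_self]
    · rw [h1 j hj, Function.update_of_ne (by rintro rfl; exact hi hj)]
  · intro h
    refine ⟨fun j hj => ?_, ?_⟩
    · rw [h j (Or.inr hj), Function.update_of_ne (by rintro rfl; exact hi hj)]
    · rw [h i (Or.inl rfl), Function.update_self]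

lemma cube_insert_false {S : Finset (Fin n)} {φ} {i : Fin n} (hi : i ∉ S) :
    (cube S φ).filter (fun x => ¬ (x i = true)) = cube (insert i S) (Function.update φ i false) := by
  ext x
  simp only [Finset.mem_filter, mem_cube, Finset.mem_insert, Bool.not_eq_true]
  constructor
  · rintro ⟨h1, h2⟩ j hj
    rcases hj with rfl | hj
    · rw [h2, Function.update_self]
    · rw [h1 j hj, Function.update_of_ne (by rintro rfl; exact hi hj)]
  · intro h
    refine ⟨fun j hj => ?_, ?_⟩
    · rw [h j (Or.inr hj), Function.update_of_ne (by rintro rfl; exact hi hj)]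
    · rw [h i (Or.inl rfl), Function.update_self]

lemma ZU_split (f : Finset (Fin n) → ℂ) (U S : Finset (Fin n)) (φ) {i : Fin n} (hi : i ∉ S) :
    ZU f U S φ = ZU f U (insert i S) (Function.update φ i true)
      + ZU f U (insert i S) (Function.update φ i false) := by
  rw [ZU, ZU, ZU, ← cube_insert_true (φ := φ) hi, ← cube_insert_false (φ := φ) hi]
  exact (Finset.sum_filter_add_sum_filter_not _ _ _).symm

lemma Z_split (f : Finset (Fin n) → ℂ) (S : Finset (Fin n)) (φ) {i : Fin n} (hi : i ∉ S) :
    Z f S φ = Z f (insert i S) (Function.update φ i true)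
      + Z f (insert i S) (Function.update φ i false) := ZU_split f ∅ S φ hi

lemma chi_const {U S : Finset (Fin n)} {φ x} (hU : U ⊆ S) (hx : x ∈ cube S φ) :
    chi U x = chi U φ := by
  refine Finset.prod_congr rfl (fun i hi => ?_)
  rw [mem_cube.1 hx i (hU hi)]

lemma abs_ZU_of_subset (f : Finset (Fin n) → ℂ) {U S : Finset (Fin n)} (φ) (hU : U ⊆ S) :
    ‖ZU f U S φ‖ = ‖Z f S φ‖ := by
  have : ZU f U S φ = chi U φ * Z f S φ := by
    rw [ZU, Z_eq, Finset.mul_sum]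
    exact Finset.sum_congr rfl (fun x hx => by rw [chi_const hU hx])
  rw [this, norm_mul, abs_chi, one_mul]

lemma chi_erase {U : Finset (Fin n)} {j : Fin n} (hj : j ∈ U) (x : Fin n → Bool) :
    chi U x = sgn (x j) * chi (U.erase j) x := (Finset.mul_prod_erase U _ hj).symm

lemma card_compl_insert {S : Finset (Fin n)} {i : Fin n} (hi : i ∉ S) :
    ((insert i S)ᶜ).card + 1 = (Sᶜ).card := by
  rw [Finset.compl_insert, Finset.card_erase_of_mem (Finset.mem_compl.2 hi)]
  have : 0 < (Sᶜ).card := Finset.card_pos.2 ⟨i, Finset.mem_compl.2 hi⟩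
  omega

lemma cube_univ (φ : Fin n → Bool) : cube Finset.univ φ = {φ} := by
  ext x
  simp only [mem_cube, Finset.mem_singleton]
  constructor
  · intro h; funext i; exact h i (Finset.mem_univ i)
  · rintro rfl i _; rfl

lemma compl_card_zero {S : Finset (Fin n)} (h : (Sᶜ).card = 0) : S = Finset.univ := by
  have : Sᶜ = ∅ := Finset.card_eq_zero.1 h
  simpa [Finset.compl_eq_empty_iff] using this

def Ft (f : Finset (Fin n) → ℂ) (i : Fin n) (t : ℝ) : Finset (Fin n) → ℂ :=
  fun U => if i ∈ U then 0 else f U + ((2*t-1 : ℝ) : ℂ) * f (insert i U)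

def gf (f : Finset (Fin n) → ℂ) (i : Fin n) : Finset (Fin n) → ℂ :=
  fun U => if i ∈ U then 0 else 2 * f (insert i U)

lemma ev_Ft (f : Finset (Fin n) → ℂ) (i : Fin n) (t : ℝ) (x : Fin n → Bool) :
    ev (Ft f i t) x = ev (Ft f i 0) x + (t : ℂ) * ev (gf f i) x := by
  rw [ev, ev, ev, Finset.mul_sum, ← Finset.sum_add_distrib]
  refine Finset.sum_congr rfl (fun U _ => ?_)
  by_cases hU : i ∈ U <;> simp only [Ft, gf, hU, if_true, if_false] <;> push_cast <;> ring

lemma chi_update_of_not_mem {U : Finset (Fin n)} {i : Fin n} (hi : i ∉ U) (x b) :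
    chi U (Function.update x i b) = chi U x := by
  refine Finset.prod_congr rfl (fun j hj => ?_)
  rw [Function.update_of_ne (by rintro rfl; exact hi hj)]

lemma ev_update (f : Finset (Fin n) → ℂ) (i : Fin n) (x : Fin n → Bool) (b : Bool) :
    ev f (Function.update x i b)
      = ∑ U ∈ univ.filter (fun U : Finset (Fin n) => i ∉ U),
          (f U + sgn b * f (insert i U)) * chi U x := by
  rw [ev, ← Finset.sum_filter_add_sum_filter_not univ (fun T : Finset (Fin n) => i ∈ T)]
  have h2 : ∑ T ∈ univ.filter (fun T : Finset (Fin n) => i ∈ T),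
      f T * chi T (Function.update x i b)
      = ∑ U ∈ univ.filter (fun U : Finset (Fin n) => i ∉ U),
          sgn b * f (insert i U) * chi U x := by
    refine Finset.sum_nbij' (fun T => T.erase i) (fun U => insert i U) ?_ ?_ ?_ ?_ ?_
    · intro T hT
      simp only [Finset.mem_filter, Finset.mem_univ, true_and] at *
      exact Finset.notMem_erase i T
    · intro U hU
      simp only [Finset.mem_filter, Finset.mem_univ, true_and] at *
      exact Finset.mem_insert_self i U
    · intro T hT
      simp only [Finset.mem_filter, Finset.mem_univ, true_and] at hT
      exact Finset.insert_erase hT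
    · intro U hU
      simp only [Finset.mem_filter, Finset.mem_univ, true_and] at hU
      exact Finset.erase_insert hU
    · intro T hT
      simp only [Finset.mem_filter, Finset.mem_univ, true_and] at hT
      rw [chi_erase hT, Function.update_self,
        chi_update_of_not_mem (Finset.notMem_erase i T),
        Finset.insert_erase hT]
      ring
  have h1 : ∑ T ∈ univ.filter (fun T : Finset (Fin n) => ¬ i ∈ T),
      f T * chi T (Function.update x i b)
      = ∑ U ∈ univ.filter (fun U : Finset (Fin n) => i ∉ U), f U * chi U x := by
    refine Finset.sum_congr rfl (fun U hU => ?_)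
    simp only [Finset.mem_filter, Finset.mem_univ, true_and] at hU
    rw [chi_update_of_not_mem hU]
  rw [h1, h2, ← Finset.sum_add_distrib]
  refine Finset.sum_congr rfl (fun U _ => by ring)

lemma ev_Ft_one (f : Finset (Fin n) → ℂ) (i : Fin n) (x : Fin n → Bool) :
    ev (Ft f i 1) x = ev f (Function.update x i true) := by
  rw [ev_update, ev]
  rw [← Finset.sum_filter_add_sum_filter_not univ (fun T : Finset (Fin n) => i ∈ T)]
  have h0 : ∑ T ∈ univ.filter (fun T : Finset (Fin n) => i ∈ T), Ft f i 1 T * chi T x = 0 := by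
    refine Finset.sum_eq_zero (fun T hT => ?_)
    simp only [Finset.mem_filter, Finset.mem_univ, true_and] at hT
    simp [Ft, hT]
  rw [h0, zero_add]
  refine Finset.sum_congr rfl (fun U hU => ?_)
  simp only [Finset.mem_filter, Finset.mem_univ, true_and] at hU
  simp only [Ft, hU, if_false, sgn]
  norm_num

lemma ev_Ft_zero (f : Finset (Fin n) → ℂ) (i : Fin n) (x : Fin n → Bool) :
    ev (Ft f i 0) x = ev f (Function.update x i false) := by
  rw [ev_update, ev]
  rw [← Finset.sum_filter_add_sum_filter_not univ (fun T : Finset (Fin n) => i ∈ T)]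
  have h0 : ∑ T ∈ univ.filter (fun T : Finset (Fin n) => i ∈ T), Ft f i 0 T * chi T x = 0 := by
    refine Finset.sum_eq_zero (fun T hT => ?_)
    simp only [Finset.mem_filter, Finset.mem_univ, true_and] at hT
    simp [Ft, hT]
  rw [h0, zero_add]
  refine Finset.sum_congr rfl (fun U hU => ?_)
  simp only [Finset.mem_filter, Finset.mem_univ, true_and] at hU
  simp only [Ft, hU, if_false, sgn]
  norm_num

lemma Z_pin (f f' : Finset (Fin n) → ℂ) {S : Finset (Fin n)} (φ) {i : Fin n} (hi : i ∈ S)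
    (b : Bool) (hev : ∀ x, ev f' x = ev f (Function.update x i b)) :
    Z f' S φ = Z f S (Function.update φ i b) := by
  rw [Z_eq, Z_eq]
  refine Finset.sum_nbij' (fun x => Function.update x i b)
    (fun y => Function.update y i (φ i)) ?_ ?_ ?_ ?_ ?_
  · intro x hx
    rw [mem_cube] at *
    intro j hj
    by_cases hji : j = i
    · subst hji; rw [Function.update_self, Function.update_self]
    · rw [Function.update_of_ne hji, Function.update_of_ne hji]
      exact hx j hj
  · intro y hy
    rw [mem_cube] at *
    intro j hj
    by_cases hji : j = i
    · subst hji; rw [Function.update_self]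
    · rw [Function.update_of_ne hji]
      exact (hy j hj).trans (Function.update_of_ne hji b φ)
  · intro x hx
    rw [mem_cube] at hx
    have : φ i = x i := (hx i hi).symm
    rw [this, Function.update_idem, Function.update_eq_self]
  · intro y hy
    rw [mem_cube] at hy
    have hyi : y i = b := by rw [hy i hi, Function.update_self]
    rw [Function.update_idem, ← hyi, Function.update_eq_self]
  · intro x hx
    rw [hev x]

lemma L_nonneg {D L} {f : Finset (Fin n) → ℂ} (hf : Valid D L f) (i : Fin n) : 0 ≤ L :=
  le_trans (Finset.sum_nonneg (fun T _ => norm_nonneg (f T))) (hf.2 i)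

lemma Ft_valid {D : ℕ} {L : ℝ} {f : Finset (Fin n) → ℂ} (hf : Valid D L f) (i : Fin n)
    {t : ℝ} (h0 : 0 ≤ t) (h1 : t ≤ 1) : Valid D L (Ft f i t) := by
  constructor
  · intro T hT
    by_cases hiT : i ∈ T
    · simp [Ft, hiT] at hT
    · by_cases hfT : f T = 0
      · have : f (insert i T) ≠ 0 := by
          intro hc
          exact hT (by simp [Ft, hiT, hfT, hc])
        exact le_trans (Finset.card_le_card (Finset.subset_insert i T)) (hf.1 _ this)
      · exact hf.1 T hfT
  · intro j
    by_cases hji : j = i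
    · subst hji
      have : ∀ T ∈ univ.filter (fun T : Finset (Fin n) => j ∈ T),
          ‖Ft f j t T‖ = 0 := by
        intro T hT
        simp only [Finset.mem_filter, Finset.mem_univ, true_and] at hT
        simp [Ft, hT]
      rw [Finset.sum_congr rfl this, Finset.sum_const, smul_zero]
      exact L_nonneg hf j
    · set A := univ.filter (fun T : Finset (Fin n) => j ∈ T) with hA
      rw [← Finset.sum_filter_add_sum_filter_not A (fun T : Finset (Fin n) => i ∈ T)]
      have hzero : ∑ T ∈ A.filter (fun T : Finset (Fin n) => i ∈ T),
          ‖Ft f i t T‖ = 0 := by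
        refine Finset.sum_eq_zero (fun T hT => ?_)
        simp only [Finset.mem_filter] at hT
        simp [Ft, hT.2]
      have hc1 : ‖((2*t-1 : ℝ) : ℂ)‖ ≤ 1 := by
        rw [Complex.norm_real, Real.norm_eq_abs]
        rw [abs_le]
        constructor <;> linarith
      have hbound : ∑ T ∈ A.filter (fun T : Finset (Fin n) => ¬ i ∈ T),
          ‖Ft f i t T‖
          ≤ ∑ T ∈ A.filter (fun T : Finset (Fin n) => ¬ i ∈ T),
              (‖f T‖ + ‖f (insert i T)‖) := by
        refine Finset.sum_le_sum (fun T hT => ?_)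
        simp only [Finset.mem_filter] at hT
        simp only [Ft, hT.2, if_false]
        refine le_trans (norm_add_le _ _) ?_
        rw [norm_mul]
        nlinarith [norm_nonneg (f (insert i T)), norm_nonneg (f T),
          norm_nonneg ((2*t-1 : ℝ) : ℂ)]
      have hswap : ∑ T ∈ A.filter (fun T : Finset (Fin n) => ¬ i ∈ T),
          ‖f (insert i T)‖
          = ∑ T ∈ A.filter (fun T : Finset (Fin n) => i ∈ T), ‖f T‖ := by
        refine Finset.sum_nbij' (fun T => insert i T) (fun T => T.erase i) ?_ ?_ ?_ ?_ ?_
        · intro T hT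
          simp only [hA, Finset.mem_filter, Finset.mem_univ, true_and] at *
          exact ⟨Finset.mem_insert_of_mem hT.1, Finset.mem_insert_self i T⟩
        · intro T hT
          simp only [hA, Finset.mem_filter, Finset.mem_univ, true_and] at *
          exact ⟨Finset.mem_erase.2 ⟨hji, hT.1⟩, Finset.notMem_erase i T⟩
        · intro T hT
          simp only [hA, Finset.mem_filter, Finset.mem_univ, true_and] at hT
          exact Finset.erase_insert hT.2
        · intro T hT
          simp only [hA, Finset.mem_filter, Finset.mem_univ, true_and] at hT
          exact Finset.insert_erase hT.2
        · intro T _; rfl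
      rw [hzero, zero_add]
      refine le_trans hbound ?_
      rw [Finset.sum_add_distrib, hswap]
      have := Finset.sum_filter_add_sum_filter_not A (fun T : Finset (Fin n) => ¬ i ∈ T)
        (fun T => ‖f T‖)
      calc ∑ T ∈ A.filter (fun T : Finset (Fin n) => ¬ i ∈ T), ‖f T‖
            + ∑ T ∈ A.filter (fun T : Finset (Fin n) => i ∈ T), ‖f T‖
          = ∑ T ∈ A, ‖f T‖ := by
            rw [← Finset.sum_filter_add_sum_filter_not A (fun T : Finset (Fin n) => i ∈ T)
              (fun T => ‖f T‖)]
            ring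
        _ ≤ L := hf.2 j

def Zd (f : Finset (Fin n) → ℂ) (i : Fin n) (S : Finset (Fin n)) (φ : Fin n → Bool)
    (t : ℝ) : ℂ :=
  ∑ x ∈ cube S φ, ev (gf f i) x * Complex.exp (ev (Ft f i t) x)

lemma hasDerivAt_Z (f : Finset (Fin n) → ℂ) (i : Fin n) (S : Finset (Fin n)) (φ) (t : ℝ) :
    HasDerivAt (fun t : ℝ => Z (Ft f i t) S φ) (Zd f i S φ t) t := by
  have h1 : ∀ s : ℝ, Z (Ft f i s) S φ
      = ∑ x ∈ cube S φ, Complex.exp (ev (Ft f i 0) x + (s:ℂ) * ev (gf f i) x) := by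
    intro s
    rw [Z_eq]
    exact Finset.sum_congr rfl (fun x _ => by rw [ev_Ft])
  have h2 : Zd f i S φ t
      = ∑ x ∈ cube S φ, ev (gf f i) x * Complex.exp (ev (Ft f i 0) x + (t:ℂ) * ev (gf f i) x) := by
    rw [Zd]
    exact Finset.sum_congr rfl (fun x _ => by rw [ev_Ft])
  rw [h2]
  have : ∀ s : ℝ, (fun s : ℝ => Z (Ft f i s) S φ) s
      = ∑ x ∈ cube S φ, Complex.exp (ev (Ft f i 0) x + (s:ℂ) * ev (gf f i) x) := h1
  refine HasDerivAt.congr_of_eventuallyEq ?_ (Filter.Eventually.of_forall h1)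
  refine HasDerivAt.fun_sum (fun x _ => ?_)
  set a := ev (Ft f i 0) x
  set b := ev (gf f i) x
  have hlin : HasDerivAt (fun s : ℝ => a + (s:ℂ) * b) b t := by
    have h3 : HasDerivAt (fun s : ℝ => (s:ℂ)) 1 t := Complex.ofRealCLM.hasDerivAt
    simpa using (h3.mul_const b).const_add a
  have := hlin.cexp
  convert this using 1
  · rfl
  · ring

lemma continuous_Zd (f : Finset (Fin n) → ℂ) (i : Fin n) (S : Finset (Fin n)) (φ) :
    Continuous (fun t : ℝ => Zd f i S φ t) := by
  have h2 : ∀ t : ℝ, Zd f i S φ t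
      = ∑ x ∈ cube S φ, ev (gf f i) x * Complex.exp (ev (Ft f i 0) x + (t:ℂ) * ev (gf f i) x) := by
    intro t
    rw [Zd]
    exact Finset.sum_congr rfl (fun x _ => by rw [ev_Ft])
  simp only [h2]
  refine continuous_finset_sum _ (fun x _ => ?_)
  exact continuous_const.mul (Complex.continuous_exp.comp
    (continuous_const.add (Complex.continuous_ofReal.mul continuous_const)))

lemma continuous_Zt (f : Finset (Fin n) → ℂ) (i : Fin n) (S : Finset (Fin n)) (φ) :
    Continuous (fun t : ℝ => Z (Ft f i t) S φ) := by
  have h1 : ∀ s : ℝ, Z (Ft f i s) S φ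
      = ∑ x ∈ cube S φ, Complex.exp (ev (Ft f i 0) x + (s:ℂ) * ev (gf f i) x) := by
    intro s
    rw [Z_eq]
    exact Finset.sum_congr rfl (fun x _ => by rw [ev_Ft])
  simp only [h1]
  refine continuous_finset_sum _ (fun x _ => ?_)
  exact Complex.continuous_exp.comp
    (continuous_const.add (Complex.continuous_ofReal.mul continuous_const))

lemma Zd_eq_sum (f : Finset (Fin n) → ℂ) (i : Fin n) (S : Finset (Fin n)) (φ) (t : ℝ) :
    Zd f i S φ t = ∑ U : Finset (Fin n), gf f i U * ZU (Ft f i t) U S φ := by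
  rw [Zd]
  have : ∀ x ∈ cube S φ, ev (gf f i) x * Complex.exp (ev (Ft f i t) x)
      = ∑ U : Finset (Fin n), gf f i U * (chi U x * Complex.exp (ev (Ft f i t) x)) := by
    intro x _
    rw [ev, Finset.sum_mul]
    exact Finset.sum_congr rfl (fun U _ => by ring)
  rw [Finset.sum_congr rfl this, Finset.sum_comm]
  exact Finset.sum_congr rfl (fun U _ => by rw [ZU, Finset.mul_sum])

section Numeric

variable {D : ℕ}

lemma sqrtD_ge_one (hD : 1 ≤ D) : 1 ≤ Real.sqrt D := by
  rw [show (1:ℝ) = Real.sqrt 1 by simp]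
  exact Real.sqrt_le_sqrt (by exact_mod_cast hD)

lemma cos_pos (hD : 1 ≤ D) : 0 < Real.cos (1 / Real.sqrt D) := by
  apply Real.cos_pos_of_mem_Ioo
  constructor
  · have : (0:ℝ) < 1 / Real.sqrt D := by positivity
    nlinarith [Real.pi_gt_three]
  · have h1 : 1 / Real.sqrt D ≤ 1 := by
      rw [div_le_one (by positivity)]
      exact sqrtD_ge_one hD
    nlinarith [Real.pi_gt_three]

lemma one_le_inv_cos (hD : 1 ≤ D) : 1 ≤ 1 / Real.cos (1 / Real.sqrt D) := by
  rw [le_div_iff₀ (cos_pos hD), one_mul]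
  exact Real.cos_le_one _

lemma cos_ge (hD : 1 ≤ D) : 1 - 1/(2*(D:ℝ)) ≤ Real.cos (1 / Real.sqrt D) := by
  have h := Real.one_sub_sq_div_two_le_cos (x := 1 / Real.sqrt D)
  have hsq : (1 / Real.sqrt D)^2 = 1 / (D:ℝ) := by
    rw [div_pow, one_pow, Real.sq_sqrt (by positivity : (0:ℝ) ≤ (D:ℝ))]
  rw [hsq] at h
  have : 1 - 1/(D:ℝ)/2 = 1 - 1/(2*(D:ℝ)) := by ring
  linarith [h, this.symm.le]

lemma pow_beta_ge (hD : 1 ≤ D) :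
    Real.exp (-(1/2)) ≤ (1 - 1/(2*(D:ℝ)))^(D-1) := by
  have hd1 : (1:ℝ) ≤ (D:ℝ) := by exact_mod_cast hD
  set β : ℝ := 1 - 1/(2*(D:ℝ)) with hβ
  have hβpos : 0 < β := by
    rw [hβ]
    have : 1/(2*(D:ℝ)) ≤ 1/2 := by
      apply div_le_div_of_nonneg_left <;> linarith
    linarith
  have hlogβ : -(1/(2*(D:ℝ)-1)) ≤ Real.log β := by
    have hinv : Real.log (1/β) ≤ 1/β - 1 := Real.log_le_sub_one_of_pos (by positivity)
    have h2 : 1/β - 1 = 1/(2*(D:ℝ)-1) := by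
      rw [hβ]
      have hne : (2*(D:ℝ)) ≠ 0 := by positivity
      have hne2 : 1 - 1/(2*(D:ℝ)) ≠ 0 := by
        have : 1/(2*(D:ℝ)) ≤ 1/2 := by
          apply div_le_div_of_nonneg_left <;> linarith
        intro hc; rw [sub_eq_zero] at hc; rw [← hc] at this; linarith
      have hne3 : (2*(D:ℝ)-1) ≠ 0 := by intro hc; nlinarith
      field_simp
      ring
    rw [one_div, Real.log_inv] at hinv
    rw [← one_div] at hinv
    linarith [hinv, h2.le]
  have hcard : ((D:ℝ) - 1) * (1/(2*(D:ℝ)-1)) ≤ 1/2 := by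
    rw [mul_one_div, div_le_div_iff₀ (by linarith) two_pos]
    linarith
  have hk : ((D:ℝ)) - 1 = ((D-1 : ℕ) : ℝ) := by
    rw [Nat.cast_sub hD, Nat.cast_one]
  have hmul : -(1/2) ≤ ((D:ℝ)-1) * Real.log β := by
    have h1 : ((D:ℝ)-1) * (-(1/(2*(D:ℝ)-1))) ≤ ((D:ℝ)-1) * Real.log β :=
      mul_le_mul_of_nonneg_left hlogβ (by linarith)
    nlinarith [hcard]
  calc Real.exp (-(1/2)) ≤ Real.exp (((D:ℝ)-1) * Real.log β) := Real.exp_le_exp.2 hmul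
    _ = β^(D-1) := by
        rw [hk, Real.exp_nat_mul, Real.exp_log hβpos]

lemma inv_cos_pow_le (hD : 1 ≤ D) :
    (1 / Real.cos (1/Real.sqrt D))^(D-1) ≤ Real.exp (1/2) := by
  set c := Real.cos (1/Real.sqrt D) with hc
  have hcpos : 0 < c := cos_pos hD
  have hβ : Real.exp (-(1/2)) ≤ c^(D-1) := by
    refine le_trans (pow_beta_ge hD) ?_
    apply pow_le_pow_left₀
    · have hd1 : (1:ℝ) ≤ (D:ℝ) := by exact_mod_cast hD
      have : 1/(2*(D:ℝ)) ≤ 1/2 := by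
        apply div_le_div_of_nonneg_left <;> linarith
      linarith
    · exact cos_ge hD
  have hpow : (0:ℝ) < c^(D-1) := pow_pos hcpos _
  rw [div_pow, one_pow, div_le_iff₀ hpow]
  have h5 : Real.exp (1/2) * Real.exp (-(1/2)) ≤ Real.exp (1/2) * c^(D-1) :=
    mul_le_mul_of_nonneg_left hβ (Real.exp_nonneg _)
  rw [← Real.exp_add] at h5
  norm_num at h5
  linarith

lemma exp_half_lt : Real.exp (1/2) < 20/11 := by
  have h2 : Real.exp (1/2)^2 = Real.exp 1 := by
    rw [← Real.exp_nat_mul]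
    norm_num
  have h3 : Real.exp (1/2)^2 < (20/11:ℝ)^2 := by
    rw [h2]
    nlinarith [Real.exp_one_lt_d9]
  exact lt_of_pow_lt_pow_left₀ 2 (by norm_num) h3

lemma key_numeric (hD : 1 ≤ D) {L : ℝ} (hL0 : 0 ≤ L) (hL : Real.sqrt D * L < 0.55) :
    2 * L * (1 / Real.cos (1/Real.sqrt D))^(D-1) ≤ 2 / Real.sqrt D := by
  have hs : (0:ℝ) < Real.sqrt D := lt_of_lt_of_le one_pos (sqrtD_ge_one hD)
  set P := (1 / Real.cos (1/Real.sqrt D))^(D-1) with hP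
  have hPle : P ≤ 20/11 := le_trans (inv_cos_pow_le hD) exp_half_lt.le
  have hP0 : (0:ℝ) ≤ P := by
    rw [hP]
    exact pow_nonneg (le_of_lt (div_pos one_pos (cos_pos hD))) _
  have h1 : 2 * L * P ≤ 2 * L * (20/11) := by nlinarith
  have h2 : 2 * L * (20/11) ≤ 2 / Real.sqrt D := by
    rw [le_div_iff₀ hs]
    nlinarith
  linarith

end Numeric

lemma ZU_erase (f : Finset (Fin n) → ℂ) {U : Finset (Fin n)} {j : Fin n} (hj : j ∈ U)
    {S : Finset (Fin n)} {φ} (hjS : j ∈ S) :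
    ZU f U S φ = sgn (φ j) * ZU f (U.erase j) S φ := by
  rw [ZU, ZU, Finset.mul_sum]
  refine Finset.sum_congr rfl (fun x hx => ?_)
  rw [chi_erase hj, mem_cube.1 hx j hjS]
  ring

lemma gf_sum_le {D : ℕ} {L : ℝ} {f : Finset (Fin n) → ℂ} (hf : Valid D L f) (i : Fin n) :
    ∑ U : Finset (Fin n), ‖gf f i U‖ ≤ 2 * L := by
  rw [← Finset.sum_filter_add_sum_filter_not univ (fun U : Finset (Fin n) => i ∈ U)]
  have h0 : ∑ U ∈ univ.filter (fun U : Finset (Fin n) => i ∈ U),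
      ‖gf f i U‖ = 0 := by
    refine Finset.sum_eq_zero (fun U hU => ?_)
    simp only [Finset.mem_filter, Finset.mem_univ, true_and] at hU
    simp [gf, hU]
  rw [h0, zero_add]
  have h1 : ∑ U ∈ univ.filter (fun U : Finset (Fin n) => ¬ i ∈ U),
      ‖gf f i U‖
      = ∑ T ∈ univ.filter (fun T : Finset (Fin n) => i ∈ T), 2 * ‖f T‖ := by
    refine Finset.sum_nbij' (fun U => insert i U) (fun T => T.erase i) ?_ ?_ ?_ ?_ ?_
    · intro U hU
      simp only [Finset.mem_filter, Finset.mem_univ, true_and] at *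
      exact Finset.mem_insert_self i U
    · intro T hT
      simp only [Finset.mem_filter, Finset.mem_univ, true_and] at *
      exact Finset.notMem_erase i T
    · intro U hU
      simp only [Finset.mem_filter, Finset.mem_univ, true_and] at hU
      exact Finset.erase_insert hU
    · intro T hT
      simp only [Finset.mem_filter, Finset.mem_univ, true_and] at hT
      exact Finset.insert_erase hT
    · intro U hU
      simp only [Finset.mem_filter, Finset.mem_univ, true_and] at hU
      simp [gf, hU]
  rw [h1, ← Finset.mul_sum]
  have := hf.2 i
  linarith [this, L_nonneg hf i]

theorem master (D : ℕ) (hD : 1 ≤ D) (L : ℝ) (hL : Real.sqrt D * L < 0.55) :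
    ∀ m : ℕ, ∀ f : Finset (Fin n) → ℂ, Valid D L f →
      (∀ (U S : Finset (Fin n)) (φ : Fin n → Bool), (Sᶜ).card = m →
        ‖ZU f U S φ‖
          ≤ (1/Real.cos (1/Real.sqrt D))^((U \ S).card) * ‖Z f S φ‖)
      ∧ (∀ (S : Finset (Fin n)) (φ : Fin n → Bool), (Sᶜ).card = m → Z f S φ ≠ 0)
      ∧ (∀ (S : Finset (Fin n)) (φ ψ : Fin n → Bool) (i : Fin n), i ∈ S →
          (∀ j ∈ S, j ≠ i → φ j = ψ j) → (Sᶜ).card = m →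
          Ang (2/Real.sqrt D) (Z f S φ) (Z f S ψ)) := by
  set κ := 1/Real.cos (1/Real.sqrt D) with hκ
  set θ := 2/Real.sqrt D with hθdef
  have hsqrt : (0:ℝ) < Real.sqrt D := lt_of_lt_of_le one_pos (sqrtD_ge_one hD)
  have hcpos : 0 < Real.cos (1/Real.sqrt D) := cos_pos hD
  have hκ1 : 1 ≤ κ := one_le_inv_cos hD
  have hθ0 : 0 ≤ θ := by positivity
  have hθπ : θ < Real.pi := by
    have h2 : θ ≤ 2 := by
      rw [hθdef, div_le_iff₀ hsqrt]
      nlinarith [sqrtD_ge_one hD]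
    nlinarith [Real.pi_gt_three]
  have hhalf : θ/2 = 1/Real.sqrt D := by rw [hθdef]; ring
  intro m
  induction m using Nat.strong_induction_on with
  | _ m IH => ?_
  -- Part Σ
  have Hsig : ∀ f : Finset (Fin n) → ℂ, Valid D L f →
      ∀ (U S : Finset (Fin n)) (φ : Fin n → Bool), (Sᶜ).card = m →
        ‖ZU f U S φ‖ ≤ κ^((U \ S).card) * ‖Z f S φ‖ := by
    intro f hf U S φ hS
    by_cases hUS : U ⊆ S
    · rw [abs_ZU_of_subset f φ hUS, Finset.sdiff_eq_empty_iff_subset.2 hUS,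
        Finset.card_empty, pow_zero, one_mul]
    · obtain ⟨j, hjU, hjS⟩ := Finset.not_subset.1 hUS
      have hm1 : ((insert j S)ᶜ).card + 1 = m := by rw [card_compl_insert hjS, hS]
      have hmlt : ((insert j S)ᶜ).card < m := by omega
      set ST := Function.update φ j true
      set SF := Function.update φ j false
      have hsplit := ZU_split f U S φ hjS
      have hT : ZU f U (insert j S) ST = ZU f (U.erase j) (insert j S) ST := by
        rw [ZU_erase f hjU (Finset.mem_insert_self j S)]
        have : ST j = true := Function.update_self j true φ
        rw [this]
        simp [sgn]
      have hF : ZU f U (insert j S) SF = - ZU f (U.erase j) (insert j S) SF := by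
        rw [ZU_erase f hjU (Finset.mem_insert_self j S)]
        have : SF j = false := Function.update_self j false φ
        rw [this]
        simp [sgn]
      have hcard' : ((U.erase j) \ insert j S).card = (U \ S).card - 1 := by
        have hset : (U.erase j) \ insert j S = (U \ S).erase j := by
          ext a
          simp only [Finset.mem_sdiff, Finset.mem_erase, Finset.mem_insert]
          tauto
        rw [hset, Finset.card_erase_of_mem (Finset.mem_sdiff.2 ⟨hjU, hjS⟩)]
      have hIH := (IH _ hmlt f hf).1
      have hBT := hIH (U.erase j) (insert j S) ST rfl
      have hBF := hIH (U.erase j) (insert j S) SF rfl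
      have hAng := (IH _ hmlt f hf).2.2 (insert j S) ST SF j (Finset.mem_insert_self j S)
        (fun k _ hk => by
          simp only [ST, SF, Function.update_of_ne hk]) rfl
      have hcos := hAng.cos_mul_le hθ0 (le_of_lt hθπ)
      rw [hhalf] at hcos
      have hZsum : Z f (insert j S) ST + Z f (insert j S) SF = Z f S φ :=
        (Z_split f S φ hjS).symm
      have hk1 : 1 ≤ (U \ S).card :=
        Finset.card_pos.2 ⟨j, Finset.mem_sdiff.2 ⟨hjU, hjS⟩⟩
      have habs : ‖ZU f U S φ‖
          ≤ ‖ZU f (U.erase j) (insert j S) ST‖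
            + ‖ZU f (U.erase j) (insert j S) SF‖ := by
        rw [hsplit, hT, hF]
        refine le_trans (norm_add_le _ _) ?_
        rw [norm_neg]
      have hZ1 : ‖Z f (insert j S) ST‖ + ‖Z f (insert j S) SF‖
          ≤ κ * ‖Z f S φ‖ := by
        rw [hκ, ← hZsum]
        rw [div_mul_eq_mul_div, one_mul, le_div_iff₀ hcpos]
        linarith [hcos]
      calc ‖ZU f U S φ‖
          ≤ κ^((U \ S).card - 1) * ‖Z f (insert j S) ST‖
            + κ^((U \ S).card - 1) * ‖Z f (insert j S) SF‖ := by
            rw [← hcard']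
            exact le_trans habs (add_le_add hBT hBF)
        _ = κ^((U \ S).card - 1) * (‖Z f (insert j S) ST‖
            + ‖Z f (insert j S) SF‖) := by ring
        _ ≤ κ^((U \ S).card - 1) * (κ * ‖Z f S φ‖) := by
            refine mul_le_mul_of_nonneg_left hZ1 (pow_nonneg (by linarith) _)
        _ = κ^((U \ S).card) * ‖Z f S φ‖ := by
            rw [← mul_assoc, ← pow_succ]
            congr 2
            omega
  -- Part P
  have HP : ∀ f : Finset (Fin n) → ℂ, Valid D L f →
      ∀ (S : Finset (Fin n)) (φ : Fin n → Bool), (Sᶜ).card = m → Z f S φ ≠ 0 := by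
    intro f hf S φ hS
    rcases Nat.eq_zero_or_pos m with hm0 | hmpos
    · subst hm0
      rw [compl_card_zero hS, Z_eq, cube_univ, Finset.sum_singleton]
      exact Complex.exp_ne_zero _
    · have hne : Sᶜ.Nonempty := Finset.card_pos.1 (hS ▸ hmpos)
      obtain ⟨i, hi⟩ := hne
      have hiS : i ∉ S := Finset.mem_compl.1 hi
      have hm1 : ((insert i S)ᶜ).card + 1 = m := by rw [card_compl_insert hiS, hS]
      have hmlt : ((insert i S)ᶜ).card < m := by omega
      have hAng := (IH _ hmlt f hf).2.2 (insert i S) (Function.update φ i true)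
        (Function.update φ i false) i (Finset.mem_insert_self i S)
        (fun k _ hk => by simp only [Function.update_of_ne hk]) rfl
      have hnz := (IH _ hmlt f hf).2.1 (insert i S) (Function.update φ i false) rfl
      rw [Z_split f S φ hiS]
      exact hAng.add_ne_zero hnz hθπ
  -- Part Q
  have HQ : ∀ f : Finset (Fin n) → ℂ, Valid D L f →
      ∀ (S : Finset (Fin n)) (φ ψ : Fin n → Bool) (i : Fin n), i ∈ S →
        (∀ j ∈ S, j ≠ i → φ j = ψ j) → (Sᶜ).card = m →
        Ang θ (Z f S φ) (Z f S ψ) := by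
    intro f hf S φ ψ i hiS hagree hS
    have hL0 : 0 ≤ L := L_nonneg hf i
    have main : Ang θ (Z f S (Function.update φ i true))
        (Z f S (Function.update φ i false)) := by
      set Zt : ℝ → ℂ := fun t => Z (Ft f i t) S φ with hZtd
      have hend1 : Zt 1 = Z f S (Function.update φ i true) :=
        Z_pin f (Ft f i 1) φ hiS true (ev_Ft_one f i)
      have hend0 : Zt 0 = Z f S (Function.update φ i false) :=
        Z_pin f (Ft f i 0) φ hiS false (ev_Ft_zero f i)
      have hnz : ∀ t ∈ Set.Icc (0:ℝ) 1, Zt t ≠ 0 := fun t ht =>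
        HP (Ft f i t) (Ft_valid hf i ht.1 ht.2) S φ hS
      set M := 2 * L * κ^(D-1) with hMd
      have hM0 : 0 ≤ M := mul_nonneg (by linarith) (pow_nonneg (by linarith) _)
      have hMθ : M ≤ θ := key_numeric hD hL0 hL
      have hMb : ∀ t ∈ Set.Icc (0:ℝ) 1,
          ‖Zd f i S φ t‖ ≤ M * ‖Zt t‖ := by
        intro t ht
        have hvalid := Ft_valid hf i ht.1 ht.2
        rw [Zd_eq_sum]
        refine le_trans (norm_sum_le _ _) ?_
        have hterm : ∀ U : Finset (Fin n),
            ‖gf f i U * ZU (Ft f i t) U S φ‖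
            ≤ ‖gf f i U‖ * (κ^(D-1) * ‖Zt t‖) := by
          intro U
          rw [norm_mul]
          by_cases hg0 : gf f i U = 0
          · rw [hg0, norm_zero, zero_mul, zero_mul]
          · have hiU : i ∉ U := by
              by_contra hc
              exact hg0 (by simp [gf, hc])
            have hfne : f (insert i U) ≠ 0 := by
              intro hc
              exact hg0 (by simp [gf, hiU, hc])
            have hcard : U.card ≤ D - 1 := by
              have h1 := hf.1 _ hfne
              rw [Finset.card_insert_of_notMem hiU] at h1
              omega
            have h2 := Hsig (Ft f i t) hvalid U S φ hS
            have h3 : κ^((U \ S).card) ≤ κ^(D-1) := by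
              apply pow_le_pow_right₀ hκ1
              exact le_trans (Finset.card_le_card (Finset.sdiff_subset)) hcard
            refine mul_le_mul_of_nonneg_left (le_trans h2 ?_) (norm_nonneg _)
            exact mul_le_mul_of_nonneg_right h3 (norm_nonneg _)
        refine le_trans (Finset.sum_le_sum (fun U _ => hterm U)) ?_
        rw [← Finset.sum_mul]
        rw [hMd, mul_assoc]
        refine mul_le_mul_of_nonneg_right (gf_sum_le hf i) ?_
        exact mul_nonneg (pow_nonneg (by linarith) _) (norm_nonneg _)
      set pr : ℝ → ℝ := fun t => max 0 (min 1 t) with hprd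
      have hprc : Continuous pr := continuous_const.max (continuous_const.min continuous_id)
      have hprmem : ∀ t, pr t ∈ Set.Icc (0:ℝ) 1 :=
        fun t => ⟨le_max_left _ _, max_le zero_le_one (min_le_left _ _)⟩
      have hpr01 : ∀ t ∈ Set.Icc (0:ℝ) 1, pr t = t := by
        intro t ht
        rw [hprd]
        dsimp only
        rw [min_eq_right ht.2, max_eq_right ht.1]
      set g : ℝ → ℂ := fun s => Zd f i S φ (pr s) / Zt (pr s) with hgd
      have hZtc : Continuous Zt := continuous_Zt f i S φ
      have hgc : Continuous g := ((continuous_Zd f i S φ).comp hprc).div (hZtc.comp hprc)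
        (fun s => hnz (pr s) (hprmem s))
      set w : ℝ → ℂ := fun t => ∫ s in (0:ℝ)..t, g s with hwd
      have hw' : ∀ t, HasDerivAt w (g t) t :=
        fun t => (hgc.integral_hasStrictDerivAt 0 t).hasDerivAt
      have hwc : Continuous w :=
        continuous_iff_continuousAt.2 (fun t => (hw' t).differentiableAt.continuousAt)
      set E : ℝ → ℂ := fun t => Zt t * Complex.exp (-(w t)) with hEd
      have hEc : Continuous E := hZtc.mul (Complex.continuous_exp.comp hwc.neg)
      have hE' : ∀ t ∈ Set.Icc (0:ℝ) 1, HasDerivAt E 0 t := by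
        intro t ht
        have h1 := hasDerivAt_Z f i S φ t
        have h2 := ((hw' t).neg).cexp
        have h3 : HasDerivAt (fun s => Z (Ft f i s) S φ * Complex.exp (-(w s))) _ t := h1.mul h2
        have hgt : g t = Zd f i S φ t / Zt t := by
          rw [hgd]
          dsimp only
          rw [hpr01 t ht]
        have hznz := hnz t ht
        convert h3 using 1
        rw [hgt]
        field_simp
        simp only [hZtd, Pi.neg_apply]
        ring
      have hconst := constant_of_has_deriv_right_zero
        (hEc.continuousOn : ContinuousOn E (Set.Icc 0 1))
        (fun x hx => (hE' x ⟨hx.1, le_of_lt hx.2⟩).hasDerivWithinAt)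
      have hE10 : E 1 = E 0 := hconst 1 (Set.mem_Icc.2 ⟨zero_le_one, le_refl 1⟩)
      have hw0 : w 0 = 0 := intervalIntegral.integral_same
      have hrel : Zt 1 = Zt 0 * Complex.exp (w 1) := by
        have h4 : Zt 1 * Complex.exp (-(w 1)) = Zt 0 := by
          have h5 : E 0 = Zt 0 := by
            rw [hEd]
            dsimp only
            rw [hw0]
            simp
          rw [← h5, ← hE10]
        calc Zt 1 = Zt 1 * Complex.exp (-(w 1)) * Complex.exp (w 1) := by
              rw [mul_assoc, ← Complex.exp_add]
              simp
          _ = Zt 0 * Complex.exp (w 1) := by rw [h4]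
      have hbnd : ‖w 1‖ ≤ M := by
        have h6 : ∀ s ∈ Set.uIoc (0:ℝ) 1, ‖g s‖ ≤ M := by
          intro s _
          have h1 := hMb (pr s) (hprmem s)
          have hznz := hnz (pr s) (hprmem s)
          rw [hgd]
          dsimp only
          rw [norm_div, div_le_iff₀ (norm_pos_iff.2 hznz)]
          exact h1
        have h7 := intervalIntegral.norm_integral_le_of_norm_le_const h6
        simpa using h7
      refine ⟨w 1, ?_, ?_⟩
      · rw [← hend1, ← hend0, hrel]
      · refine le_trans (Complex.abs_im_le_norm _) (le_trans ?_ hMθ)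
        exact hbnd
    have hφ' : Z f S φ = Z f S (Function.update φ i (φ i)) := by
      rw [Function.update_eq_self]
    have hψ' : Z f S ψ = Z f S (Function.update φ i (ψ i)) := by
      refine Z_congr f (fun j hj => ?_)
      by_cases hji : j = i
      · subst hji
        rw [Function.update_self]
      · rw [Function.update_of_ne hji]
        exact (hagree j hj hji).symm
    rw [hφ', hψ']
    cases hb : φ i <;> cases hb' : ψ i
    · exact Ang.refl θ hθ0 _
    · exact main.symm
    · exact main
    · exact Ang.refl θ hθ0 _
  exact fun f hf => ⟨Hsig f hf, HP f hf, HQ f hf⟩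

end

end S17

/-- Barvinok's zero-freeness theorem for partition functions on the Boolean
cube: if `√(deg f) · L(f) < C` for an absolute constant `C ≈ 0.55`, then all
pinned partition sums `∑ exp(f(x))` are nonzero. -/
theorem stmt17 : ∃ C : ℝ, 0.55 ≤ C ∧
    ∀ (n : ℕ) (fhat : Finset (Fin n) → ℂ) (D : ℕ) (L : ℝ),
      (∀ T : Finset (Fin n), fhat T ≠ 0 → T.card ≤ D) →
      (∀ i : Fin n,
        ∑ T ∈ Finset.univ.filter (fun T : Finset (Fin n) => i ∈ T),
          ‖fhat T‖ ≤ L) →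
      Real.sqrt D * L < C →
      ∀ (S : Finset (Fin n)) (φ : Fin n → Bool),
        ∑ x ∈ Finset.univ.filter (fun x : Fin n → Bool => ∀ i ∈ S, x i = φ i),
          Complex.exp (∑ T : Finset (Fin n),
            fhat T * ∏ i ∈ T, (if x i then 1 else -1 : ℂ)) ≠ 0 := by
  refine ⟨0.55, le_refl _, ?_⟩
  intro n fhat D L hdeg hLb hlt S φ
  have hgoal : (∑ x ∈ Finset.univ.filter (fun x : Fin n → Bool => ∀ i ∈ S, x i = φ i),
      Complex.exp (∑ T : Finset (Fin n),
        fhat T * ∏ i ∈ T, (if x i then 1 else -1 : ℂ))) = S17.Z fhat S φ := by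
    rw [S17.Z_eq]
    rfl
  rw [hgoal]
  rcases Nat.eq_zero_or_pos D with hD0 | hDpos
  · subst hD0
    have hev : ∀ x, S17.ev fhat x = fhat ∅ := by
      intro x
      rw [S17.ev]
      rw [Finset.sum_eq_single ∅]
      · simp [S17.chi]
      · intro T _ hT
        have : fhat T = 0 := by
          by_contra hc
          have := hdeg T hc
          exact hT (Finset.card_eq_zero.1 (Nat.le_zero.1 this))
        rw [this, zero_mul]
      · intro h
        exact absurd (Finset.mem_univ ∅) h
    rw [S17.Z_eq]
    have : ∑ x ∈ S17.cube S φ, Complex.exp (S17.ev fhat x)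
        = (S17.cube S φ).card • Complex.exp (fhat ∅) := by
      rw [Finset.sum_congr rfl (fun x _ => by rw [hev x]), Finset.sum_const]
    rw [this]
    have hne : (S17.cube S φ).Nonempty := ⟨φ, S17.mem_cube.2 (fun i _ => rfl)⟩
    have hcard : (S17.cube S φ).card ≠ 0 := Finset.card_ne_zero_of_mem hne.choose_spec
    simp only [nsmul_eq_mul]
    exact mul_ne_zero (Nat.cast_ne_zero.2 hcard) (Complex.exp_ne_zero _)
  · exact (S17.master D hDpos L hlt (Sᶜ.card) fhat ⟨hdeg, hLb⟩).2.1 S φ rfl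
end

section
/- Let t > 1 and let D̄ = D̄(−(t²+1)/(t²−1), 2t/(t²−1)) be the closed disk with the given center and radius. Then the set −D̄·D̄ = {−zw : z,w ∈ D̄} is contained in −H̄_c·H̄_c where c = (t−1)/(t+1) and H̄_c = {x+iy : x ≤ −c}; consequently the complement of −D̄·D̄ contains the open parabolic region {x+iy : y² < 4c²(x+c²)}, and in particular contains the positive real axis. -/
open Pointwise

lemma stmt19_key (a b p q c : ℝ) (hc : 0 < c) (ha : c ≤ a) (hb : c ≤ b) :
    4 * c ^ 2 * ((p * q - a * b) + c ^ 2) ≤ (a * q + b * p) ^ 2 := by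
  have hab : c ^ 2 ≤ a * b := by nlinarith
  rcases le_or_gt (p * q) 0 with h | h
  · nlinarith [sq_nonneg (a * q + b * p)]
  · nlinarith [sq_nonneg (a * q - b * p), mul_le_mul_of_nonneg_right hab h.le]

/-- The negated Minkowski square of the closed disk
`D̄(-(t²+1)/(t²-1), 2t/(t²-1))` is contained in `-H̄c·H̄c` with
`c = (t-1)/(t+1)`; consequently its complement contains the open parabolic
region `{y² < 4c²(x+c²)}` and in particular the positive real axis. -/
theorem stmt19 (t c : ℝ) (ht : 1 < t) (hc : c = (t - 1) / (t + 1))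
    (Dbar : Set ℂ)
    (hD : Dbar = Metric.closedBall ((-((t ^ 2 + 1) / (t ^ 2 - 1)) : ℝ) : ℂ)
           (2 * t / (t ^ 2 - 1))) :
    -(Dbar * Dbar) ⊆ -({z : ℂ | z.re ≤ -c} * {z : ℂ | z.re ≤ -c}) ∧
    {z : ℂ | z.im ^ 2 < 4 * c ^ 2 * (z.re + c ^ 2)} ⊆ (-(Dbar * Dbar))ᶜ ∧
    ∀ x : ℝ, 0 < x → (x : ℂ) ∈ (-(Dbar * Dbar))ᶜ := by
  have ht2 : (0:ℝ) < t ^ 2 - 1 := by nlinarith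
  have ht1 : (0:ℝ) < t + 1 := by linarith
  have hcpos : 0 < c := by
    rw [hc]
    apply div_pos <;> linarith
  -- Dbar ⊆ Hc
  have hDsub : Dbar ⊆ {z : ℂ | z.re ≤ -c} := by
    intro z hz
    rw [hD, Metric.mem_closedBall] at hz
    have h1 : (z - ((-((t ^ 2 + 1) / (t ^ 2 - 1)) : ℝ) : ℂ)).re ≤
        ‖z - ((-((t ^ 2 + 1) / (t ^ 2 - 1)) : ℝ) : ℂ)‖ :=
      Complex.re_le_norm _
    rw [Complex.dist_eq] at hz
    simp only [Complex.sub_re, Complex.ofReal_re] at h1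
    have : z.re ≤ -((t ^ 2 + 1) / (t ^ 2 - 1)) + 2 * t / (t ^ 2 - 1) := by
      linarith
    have heq : -((t ^ 2 + 1) / (t ^ 2 - 1)) + 2 * t / (t ^ 2 - 1) = -c := by
      rw [hc]; field_simp; ring
    simpa [Set.mem_setOf_eq, heq] using this
  -- first inclusion
  have h1 : -(Dbar * Dbar) ⊆ -({z : ℂ | z.re ≤ -c} * {z : ℂ | z.re ≤ -c}) :=
    Set.neg_subset_neg.mpr (Set.mul_subset_mul hDsub hDsub)
  -- parabola avoids -(Hc*Hc)
  have h2 : {z : ℂ | z.im ^ 2 < 4 * c ^ 2 * (z.re + c ^ 2)} ⊆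
      (-({z : ℂ | z.re ≤ -c} * {z : ℂ | z.re ≤ -c}))ᶜ := by
    intro z hz hmem
    rw [Set.mem_neg] at hmem
    obtain ⟨w1, hw1, w2, hw2, hw⟩ := hmem
    simp only [Set.mem_setOf_eq] at hw1 hw2 hz
    have ha : c ≤ -w1.re := by linarith
    have hb : c ≤ -w2.re := by linarith
    have hre : z.re = w1.im * w2.im - (-w1.re) * (-w2.re) := by
      have := congrArg Complex.re hw
      simp [Complex.mul_re] at this
      linarith [this]
    have him : z.im = (-w1.re) * w2.im + (-w2.re) * w1.im := by
      have := congrArg Complex.im hw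
      simp [Complex.mul_im] at this
      linarith [this]
    have := stmt19_key (-w1.re) (-w2.re) w1.im w2.im c hcpos ha hb
    rw [hre, him] at hz
    nlinarith [this, hz]
  refine ⟨h1, fun z hz => fun hmem => h2 hz (h1 hmem), ?_⟩
  intro x hx
  have : (x : ℂ) ∈ {z : ℂ | z.im ^ 2 < 4 * c ^ 2 * (z.re + c ^ 2)} := by
    simp only [Set.mem_setOf_eq, Complex.ofReal_im, Complex.ofReal_re]
    have : 0 < 4 * c ^ 2 * (x + c ^ 2) := by positivity
    nlinarith [this]
  exact (fun hmem => h2 this (h1 hmem))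
end
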